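/- Let f : ℕ → ℝ be defined by f(n) = c₆(n - n^{1 - 1/(7t)}) for constants c₆ > 0 and integer t ≥ 1. Suppose n1 + n2 ≤ n + n^{5/6} with n'/3 ≤ n1, n2 ≤ 2n'/3 where n' = n1 + n2, and suppose b ≤ 2c₅ n^{1 - 1/(4t)} with c₆ ≥ 2c₅. Then for all sufficiently large n (depending only on t, c₅), f(n1) + f(n2) + b ≤ f(n). -/
import Mathlib

open Filter Real

private lemma rpow_subadd {x y p : ℝ} (hx : 0 ≤ x) (hy : 0 ≤ y) (hp : 0 ≤ p) (hp1 : p ≤ 1) :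
    (x + y) ^ p ≤ x ^ p + y ^ p := by
  have h := NNReal.rpow_add_le_add_rpow x.toNNReal y.toNNReal hp hp1
  have h2 : (((x.toNNReal + y.toNNReal) ^ p : NNReal) : ℝ) ≤
      ((x.toNNReal ^ p : NNReal) : ℝ) + ((y.toNNReal ^ p : NNReal) : ℝ) := by
    exact_mod_cast h
  simpa [NNReal.coe_rpow, NNReal.coe_add, Real.coe_toNNReal x hx,
    Real.coe_toNNReal y hy] using h2

private lemma aux_event {a b : ℝ} (c : ℝ) (hab : a < b) (hc : 0 < c) :
    ∀ᶠ x : ℝ in atTop, x ^ a ≤ c * x ^ b := by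
  have h0 : Tendsto (fun x : ℝ => x ^ (a - b)) atTop (nhds 0) := by
    simpa [neg_sub] using tendsto_rpow_neg_atTop (y := b - a) (by linarith)
  filter_upwards [h0.eventually_le_const hc, eventually_gt_atTop (0 : ℝ)] with x hx hx0
  have heq : x ^ a = x ^ b * x ^ (a - b) := by
    rw [← Real.rpow_add hx0]; congr 1; ring
  rw [heq]
  calc x ^ b * x ^ (a - b) ≤ x ^ b * c :=
        mul_le_mul_of_nonneg_left hx (Real.rpow_nonneg hx0.le b)
    _ = c * x ^ b := mul_comm _ _

private lemma concave_pair {β : ℝ} (hβ0 : 0 < β) (hβ1 : β < 1) {x y : ℝ} (hx : 0 ≤ x)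
    (hy : 0 ≤ y) (h1 : (x + y) / 3 ≤ x) (h2 : x ≤ 2 * (x + y) / 3) :
    ((x + y) / 3) ^ β + (2 * (x + y) / 3) ^ β ≤ x ^ β + y ^ β := by
  set s := x + y with hs
  rcases eq_or_lt_of_le (by positivity : (0:ℝ) ≤ s) with h | hspos
  · have hx0 : x = 0 := le_antisymm (by linarith) hx
    have hy0 : y = 0 := by
      have : x + y = 0 := h.symm
      linarith
    simp [← h, hx0, hy0, Real.zero_rpow hβ0.ne']
  · have hs0 : s ≠ 0 := hspos.ne'
    have hconc := Real.concaveOn_rpow hβ0.le hβ1.le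
    set a : ℝ := 2 - 3 * x / s with ha
    have ha0 : 0 ≤ a := by
      have : 3 * x / s ≤ 2 := by rw [div_le_iff₀ hspos]; linarith
      rw [ha]; linarith
    have ha1 : a ≤ 1 := by
      have : 1 ≤ 3 * x / s := by rw [le_div_iff₀ hspos]; linarith
      rw [ha]; linarith
    have hax : a * (s / 3) + (1 - a) * (2 * s / 3) = x := by
      rw [ha]; field_simp; ring
    have hay : (1 - a) * (s / 3) + a * (2 * s / 3) = y := by
      rw [ha]; field_simp; ring
    have hm1 : s / 3 ∈ Set.Ici (0:ℝ) := by
      simp only [Set.mem_Ici]; positivity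
    have hm2 : 2 * s / 3 ∈ Set.Ici (0:ℝ) := by
      simp only [Set.mem_Ici]; positivity
    have k1 := hconc.2 hm1 hm2 ha0 (by linarith : (0:ℝ) ≤ 1 - a) (by ring)
    have k2 := hconc.2 hm1 hm2 (by linarith : (0:ℝ) ≤ 1 - a) ha0 (by ring)
    simp only [smul_eq_mul] at k1 k2
    rw [hax] at k1
    rw [hay] at k2
    linarith

set_option maxHeartbeats 1000000 in
theorem divide_and_conquer_recurrence (t : ℕ) (ht : 1 ≤ t) (c₅ : ℝ) (hc₅ : 0 < c₅) :
    ∃ n0 : ℕ, ∀ c₆ : ℝ, 0 < c₆ → 2 * c₅ ≤ c₆ →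
      ∀ n : ℕ, n0 ≤ n → ∀ n1 n2 : ℕ, ∀ b : ℝ,
        (n1 : ℝ) + n2 ≤ (n : ℝ) + (n : ℝ) ^ ((5 : ℝ)/6) →
        ((n1 + n2 : ℕ) : ℝ) / 3 ≤ (n1 : ℝ) → (n1 : ℝ) ≤ 2 * ((n1 + n2 : ℕ) : ℝ) / 3 →
        ((n1 + n2 : ℕ) : ℝ) / 3 ≤ (n2 : ℝ) → (n2 : ℝ) ≤ 2 * ((n1 + n2 : ℕ) : ℝ) / 3 →
        0 ≤ b → b ≤ 2 * c₅ * (n : ℝ) ^ ((1 : ℝ) - 1/(4 * t)) →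
        (fun k : ℕ => c₆ * ((k : ℝ) - (k : ℝ) ^ ((1 : ℝ) - 1/(7 * t)))) n1 +
          (fun k : ℕ => c₆ * ((k : ℝ) - (k : ℝ) ^ ((1 : ℝ) - 1/(7 * t)))) n2 + b ≤
          (fun k : ℕ => c₆ * ((k : ℝ) - (k : ℝ) ^ ((1 : ℝ) - 1/(7 * t)))) n := by
  have ht' : (1 : ℝ) ≤ (t : ℝ) := by exact_mod_cast ht
  have ht0 : (0:ℝ) < (t:ℝ) := by linarith
  have h7t : (0:ℝ) < 7 * (t:ℝ) := by linarith
  have h4t : (0:ℝ) < 4 * (t:ℝ) := by linarith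
  set β : ℝ := 1 - 1/(7 * (t : ℝ)) with hβdef
  set p : ℝ := 1 - 1/(4 * (t : ℝ)) with hpdef
  clear_value β p
  have hβ0 : 0 < β := by
    have h7 : 1/(7 * (t:ℝ)) ≤ 1/7 :=
      one_div_le_one_div_of_le (by norm_num) (by linarith)
    rw [hβdef]; linarith
  have hβ1 : β < 1 := by
    have : 0 < 1/(7 * (t:ℝ)) := by positivity
    rw [hβdef]; linarith
  have h56β : (5:ℝ)/6 < β := by
    have h7 : 1/(7 * (t:ℝ)) ≤ 1/7 :=
      one_div_le_one_div_of_le (by norm_num) (by linarith)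
    rw [hβdef]; linarith
  have hpβ : p < β := by
    have : 1/(7 * (t:ℝ)) < 1/(4 * (t:ℝ)) :=
      one_div_lt_one_div_of_lt h4t (by linarith)
    rw [hβdef, hpdef]; linarith
  have hp1 : p < 1 := by
    have : 0 < 1/(4 * (t:ℝ)) := by positivity
    rw [hpdef]; linarith
  have hε : (0:ℝ) < (1/3 : ℝ) ^ β + (2/3 : ℝ) ^ β - 1 := by
    have h1 : (1/3 : ℝ) < (1/3 : ℝ) ^ β := by
      have := Real.rpow_lt_rpow_of_exponent_gt (x := (1/3:ℝ)) (by norm_num) (by norm_num) hβ1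
      simpa [Real.rpow_one] using this
    have h2 : (2/3 : ℝ) < (2/3 : ℝ) ^ β := by
      have := Real.rpow_lt_rpow_of_exponent_gt (x := (2/3:ℝ)) (by norm_num) (by norm_num) hβ1
      simpa [Real.rpow_one] using this
    linarith
  have h2β : 0 < (2:ℝ) ^ β := Real.rpow_pos_of_pos (by norm_num) β
  -- eventual conditions
  have E : ∀ᶠ x : ℝ in atTop, (2 ≤ x ∧
      (x ^ ((5:ℝ)/6) + x ^ p ≤ ((1/3 : ℝ) ^ β + (2/3 : ℝ) ^ β - 1) * (x/2) ^ β) ∧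
      (x ^ β + x ^ p ≤ x/2)) := by
    have c1 : (0:ℝ) < ((1/3 : ℝ) ^ β + (2/3 : ℝ) ^ β - 1) / (2:ℝ)^β / 2 :=
      div_pos (div_pos hε h2β) (by norm_num)
    filter_upwards [eventually_ge_atTop (2:ℝ),
      aux_event _ h56β c1, aux_event _ hpβ c1,
      aux_event (1/4 : ℝ) hβ1 (by norm_num), aux_event (1/4 : ℝ) hp1 (by norm_num),
      eventually_gt_atTop (0:ℝ)] with x h2x e1 e2 e3 e4 hx0
    refine ⟨h2x, ?_, ?_⟩
    · have hdiv : (x/2) ^ β = x ^ β / 2 ^ β := Real.div_rpow hx0.le (by norm_num) β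
      rw [hdiv]
      have hsum := add_le_add e1 e2
      have : (((1/3 : ℝ) ^ β + (2/3 : ℝ) ^ β - 1) / (2:ℝ)^β / 2) * x ^ β +
          (((1/3 : ℝ) ^ β + (2/3 : ℝ) ^ β - 1) / (2:ℝ)^β / 2) * x ^ β =
          ((1/3 : ℝ) ^ β + (2/3 : ℝ) ^ β - 1) * (x ^ β / 2 ^ β) := by
        field_simp; ring
      linarith
    · have hx1 : x ^ (1:ℝ) = x := Real.rpow_one x
      have hsum := add_le_add e3 e4
      rw [hx1] at hsum
      exact le_trans hsum (by linarith)
  have EN : ∀ᶠ m : ℕ in atTop, (2 ≤ (m:ℝ) ∧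
      ((m:ℝ) ^ ((5:ℝ)/6) + (m:ℝ) ^ p ≤ ((1/3 : ℝ) ^ β + (2/3 : ℝ) ^ β - 1) * ((m:ℝ)/2) ^ β) ∧
      ((m:ℝ) ^ β + (m:ℝ) ^ p ≤ (m:ℝ)/2)) :=
    tendsto_natCast_atTop_atTop.eventually E
  obtain ⟨n0, hn0⟩ := eventually_atTop.mp EN
  refine ⟨n0, ?_⟩
  intro c₆ hc₆ hc56 n hn n1 n2 b h1 h2 h3 h4 h5 hb0 hb
  obtain ⟨hx2, hC2, hC3⟩ := hn0 n hn
  dsimp only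
  set N : ℝ := (n : ℝ) with hN
  set S : ℝ := ((n1 + n2 : ℕ) : ℝ) with hS
  clear_value N S
  have hScast : S = (n1 : ℝ) + (n2 : ℝ) := by rw [hS]; push_cast; ring
  have hn1 : (0:ℝ) ≤ (n1:ℝ) := Nat.cast_nonneg _
  have hn2 : (0:ℝ) ≤ (n2:ℝ) := Nat.cast_nonneg _
  have hN0 : (0:ℝ) < N := by rw [hN]; linarith
  have hNp : (0:ℝ) ≤ N ^ p := Real.rpow_nonneg hN0.le p
  have hN56 : (0:ℝ) ≤ N ^ ((5:ℝ)/6) := Real.rpow_nonneg hN0.le _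
  have hb' : b ≤ c₆ * N ^ p := by
    have := mul_le_mul_of_nonneg_right hc56 hNp
    calc b ≤ 2 * c₅ * N ^ p := hb
      _ ≤ c₆ * N ^ p := this
  suffices hmain : ((n1:ℝ) - (n1:ℝ)^β) + ((n2:ℝ) - (n2:ℝ)^β) + N ^ p ≤ N - N ^ β by
    have h' := mul_le_mul_of_nonneg_left hmain hc₆.le
    linarith [h']
  rcases lt_or_ge S (N/2) with hsmall | hbig
  · -- small case
    have hr1 : (0:ℝ) ≤ (n1:ℝ)^β := Real.rpow_nonneg hn1 β
    have hr2 : (0:ℝ) ≤ (n2:ℝ)^β := Real.rpow_nonneg hn2 β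
    have hlt : (n1:ℝ) + (n2:ℝ) < N/2 := by rw [← hScast]; exact hsmall
    linarith [hC3]
  · -- big case
    have hSpos : (0:ℝ) < S := by linarith
    have hkey : S ^ β + ((1/3 : ℝ) ^ β + (2/3 : ℝ) ^ β - 1) * (N/2) ^ β ≤
        (n1:ℝ)^β + (n2:ℝ)^β := by
      have hcp := concave_pair hβ0 hβ1 hn1 hn2 (by rw [← hScast]; exact h2)
        (by rw [← hScast]; exact h3)
      rw [← hScast] at hcp
      have e1 : (S/3) ^ β = (1/3:ℝ)^β * S ^ β := by
        rw [show S/3 = (1/3:ℝ) * S by ring, Real.mul_rpow (by norm_num) hSpos.le]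
      have e2 : (2*S/3) ^ β = (2/3:ℝ)^β * S ^ β := by
        rw [show 2*S/3 = (2/3:ℝ) * S by ring, Real.mul_rpow (by norm_num) hSpos.le]
      rw [e1, e2] at hcp
      have hmono : (N/2) ^ β ≤ S ^ β :=
        Real.rpow_le_rpow (by positivity) hbig hβ0.le
      have hint2 := mul_le_mul_of_nonneg_left hmono hε.le
      linarith [hcp, hint2]
    rcases le_or_gt N S with hNS | hSN
    · -- n ≤ n1 + n2
      have hNβ : N ^ β ≤ S ^ β := Real.rpow_le_rpow hN0.le hNS hβ0.le
      have hS_ub : S ≤ N + N ^ ((5:ℝ)/6) := by rw [hScast]; exact h1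
      linarith [hkey, hC2, hScast.le, hScast.ge]
    · -- n1 + n2 < n
      have hSNnat : ((n1 + n2 : ℕ) : ℝ) < (n : ℝ) := by rw [← hS, ← hN]; exact hSN
      have hlt : n1 + n2 < n := by exact_mod_cast hSNnat
      set d : ℕ := n - (n1 + n2) with hd
      clear_value d
      have hdpos : 1 ≤ d := by omega
      have hdR : (1:ℝ) ≤ (d:ℝ) := by exact_mod_cast hdpos
      have hNSd : N = S + (d:ℝ) := by
        rw [hN, hS, hd]
        exact_mod_cast (Nat.add_sub_cancel' hlt.le).symm
      have hsub : N ^ β ≤ S ^ β + (d:ℝ) := by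
        have hh1 := rpow_subadd hSpos.le (by linarith : (0:ℝ) ≤ (d:ℝ)) hβ0.le hβ1.le
        have hh2 : (d:ℝ) ^ β ≤ (d:ℝ) := by
          calc (d:ℝ) ^ β ≤ (d:ℝ) ^ (1:ℝ) :=
                Real.rpow_le_rpow_of_exponent_le hdR hβ1.le
            _ = (d:ℝ) := Real.rpow_one _
        rw [← hNSd] at hh1
        linarith
      linarith [hkey, hC2, hScast.le, hScast.ge, hsub, hNSd.le, hNSd.ge]
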